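/- Let N = 17364052083370132981. Then N = 548893 × 1646677 × 19211221 (so N is composite), yet N is a strong probable prime to each of the five bases 2, ⌊√N⌋, ⌊√N⌋+1, ⌊√(N/2)⌋, and ⌊√(N/2)⌋+1, and moreover, for the smallest prime p with p ≡ 1 (mod 4) and Jacobi symbol (N | p) = -1, it holds that p^((N-1)/2) ≡ -1 (mod N). -/

import Mathlib

/-- `n` is a strong probable prime to base `a`: writing `n - 1 = 2 ^ s * t` with `t` odd,
either `a ^ t ≡ 1 (mod n)` or `a ^ (2 ^ i * t) ≡ -1 (mod n)` for some `0 ≤ i < s`. -/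
def StrongProbablePrime (n a : ℕ) : Prop :=
  ∃ s t : ℕ, Odd t ∧ n - 1 = 2 ^ s * t ∧
    ((a : ZMod n) ^ t = 1 ∨ ∃ i < s, (a : ZMod n) ^ (2 ^ i * t) = -1)

private lemma sq_step {a n k k2 r r2 : ℕ} (hk : 2 * k = k2) (h : a ^ k % n = r)
    (h2 : r * r % n = r2) : a ^ k2 % n = r2 := by
  subst hk; rw [two_mul, pow_add, Nat.mul_mod, h]; exact h2

private lemma sqmul_step {a n k k2 r r2 : ℕ} (hk : 2 * k + 1 = k2) (h : a ^ k % n = r)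
    (h2 : r * r % n * (a % n) % n = r2) : a ^ k2 % n = r2 := by
  subst hk; rw [pow_succ, Nat.mul_mod, two_mul, pow_add, Nat.mul_mod (a ^ k), h]; exact h2

private lemma chain0 : 2 ^ 8682026041685066490 % 17364052083370132981 = 17364052083370132980 := by
  have h0 : 2 ^ 1 % 17364052083370132981 = 2 := by norm_num
  have h1 : 2 ^ 3 % 17364052083370132981 = 8 := sqmul_step (by norm_num) h0 (by norm_num)
  have h2 : 2 ^ 7 % 17364052083370132981 = 128 := sqmul_step (by norm_num) h1 (by norm_num)
  have h3 : 2 ^ 15 % 17364052083370132981 = 32768 := sqmul_step (by norm_num) h2 (by norm_num)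
  have h4 : 2 ^ 30 % 17364052083370132981 = 1073741824 := sq_step (by norm_num) h3 (by norm_num)
  have h5 : 2 ^ 60 % 17364052083370132981 = 1152921504606846976 := sq_step (by norm_num) h4 (by norm_num)
  have h6 : 2 ^ 120 % 17364052083370132981 = 6505318761938613219 := sq_step (by norm_num) h5 (by norm_num)
  have h7 : 2 ^ 240 % 17364052083370132981 = 12798235220099866269 := sq_step (by norm_num) h6 (by norm_num)
  have h8 : 2 ^ 481 % 17364052083370132981 = 16677332437194630188 := sqmul_step (by norm_num) h7 (by norm_num)
  have h9 : 2 ^ 963 % 17364052083370132981 = 9624729038511144400 := sqmul_step (by norm_num) h8 (by norm_num)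
  have h10 : 2 ^ 1927 % 17364052083370132981 = 2110825080848971311 := sqmul_step (by norm_num) h9 (by norm_num)
  have h11 : 2 ^ 3855 % 17364052083370132981 = 10657982242134140246 := sqmul_step (by norm_num) h10 (by norm_num)
  have h12 : 2 ^ 7711 % 17364052083370132981 = 2533741518447909378 := sqmul_step (by norm_num) h11 (by norm_num)
  have h13 : 2 ^ 15422 % 17364052083370132981 = 6184692080710465355 := sq_step (by norm_num) h12 (by norm_num)
  have h14 : 2 ^ 30844 % 17364052083370132981 = 16327479806382165052 := sq_step (by norm_num) h13 (by norm_num)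
  have h15 : 2 ^ 61689 % 17364052083370132981 = 12699409407353202290 := sqmul_step (by norm_num) h14 (by norm_num)
  have h16 : 2 ^ 123379 % 17364052083370132981 = 8493667212630407590 := sqmul_step (by norm_num) h15 (by norm_num)
  have h17 : 2 ^ 246758 % 17364052083370132981 = 17151659038253302450 := sq_step (by norm_num) h16 (by norm_num)
  have h18 : 2 ^ 493516 % 17364052083370132981 = 5189817360537957749 := sq_step (by norm_num) h17 (by norm_num)
  have h19 : 2 ^ 987032 % 17364052083370132981 = 531373857534015634 := sq_step (by norm_num) h18 (by norm_num)
  have h20 : 2 ^ 1974064 % 17364052083370132981 = 2996657969015282611 := sq_step (by norm_num) h19 (by norm_num)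
  have h21 : 2 ^ 3948128 % 17364052083370132981 = 13065438085182202980 := sq_step (by norm_num) h20 (by norm_num)
  have h22 : 2 ^ 7896256 % 17364052083370132981 = 15352405839685347978 := sq_step (by norm_num) h21 (by norm_num)
  have h23 : 2 ^ 15792513 % 17364052083370132981 = 15643634667595055897 := sqmul_step (by norm_num) h22 (by norm_num)
  have h24 : 2 ^ 31585026 % 17364052083370132981 = 9704490816972189598 := sq_step (by norm_num) h23 (by norm_num)
  have h25 : 2 ^ 63170053 % 17364052083370132981 = 3994172516359766681 := sqmul_step (by norm_num) h24 (by norm_num)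
  have h26 : 2 ^ 126340106 % 17364052083370132981 = 14312382196684038802 := sq_step (by norm_num) h25 (by norm_num)
  have h27 : 2 ^ 252680213 % 17364052083370132981 = 473138348085217131 := sqmul_step (by norm_num) h26 (by norm_num)
  have h28 : 2 ^ 505360427 % 17364052083370132981 = 3035377862331359724 := sqmul_step (by norm_num) h27 (by norm_num)
  have h29 : 2 ^ 1010720855 % 17364052083370132981 = 1763430904128496034 := sqmul_step (by norm_num) h28 (by norm_num)
  have h30 : 2 ^ 2021441711 % 17364052083370132981 = 10704969199434515428 := sqmul_step (by norm_num) h29 (by norm_num)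
  have h31 : 2 ^ 4042883423 % 17364052083370132981 = 15604916219727249980 := sqmul_step (by norm_num) h30 (by norm_num)
  have h32 : 2 ^ 8085766846 % 17364052083370132981 = 7921372567898433188 := sq_step (by norm_num) h31 (by norm_num)
  have h33 : 2 ^ 16171533692 % 17364052083370132981 = 5047600028438969631 := sq_step (by norm_num) h32 (by norm_num)
  have h34 : 2 ^ 32343067384 % 17364052083370132981 = 8623927710423667395 := sq_step (by norm_num) h33 (by norm_num)
  have h35 : 2 ^ 64686134768 % 17364052083370132981 = 574649058397502724 := sq_step (by norm_num) h34 (by norm_num)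
  have h36 : 2 ^ 129372269536 % 17364052083370132981 = 657037414162268740 := sq_step (by norm_num) h35 (by norm_num)
  have h37 : 2 ^ 258744539072 % 17364052083370132981 = 15750244854997981113 := sq_step (by norm_num) h36 (by norm_num)
  have h38 : 2 ^ 517489078145 % 17364052083370132981 = 7760553087029251750 := sqmul_step (by norm_num) h37 (by norm_num)
  have h39 : 2 ^ 1034978156290 % 17364052083370132981 = 4230934645498104043 := sq_step (by norm_num) h38 (by norm_num)
  have h40 : 2 ^ 2069956312581 % 17364052083370132981 = 7827453231439152427 := sqmul_step (by norm_num) h39 (by norm_num)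
  have h41 : 2 ^ 4139912625162 % 17364052083370132981 = 11361642845978163560 := sq_step (by norm_num) h40 (by norm_num)
  have h42 : 2 ^ 8279825250325 % 17364052083370132981 = 12808632240958503212 := sqmul_step (by norm_num) h41 (by norm_num)
  have h43 : 2 ^ 16559650500650 % 17364052083370132981 = 17358736860174640307 := sq_step (by norm_num) h42 (by norm_num)
  have h44 : 2 ^ 33119301001301 % 17364052083370132981 = 2523160236457315475 := sqmul_step (by norm_num) h43 (by norm_num)
  have h45 : 2 ^ 66238602002602 % 17364052083370132981 = 2959869810395432617 := sq_step (by norm_num) h44 (by norm_num)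
  have h46 : 2 ^ 132477204005204 % 17364052083370132981 = 10397895356117636532 := sq_step (by norm_num) h45 (by norm_num)
  have h47 : 2 ^ 264954408010408 % 17364052083370132981 = 6552662215174680025 := sq_step (by norm_num) h46 (by norm_num)
  have h48 : 2 ^ 529908816020817 % 17364052083370132981 = 6204832481791296176 := sqmul_step (by norm_num) h47 (by norm_num)
  have h49 : 2 ^ 1059817632041634 % 17364052083370132981 = 413347812480285335 := sq_step (by norm_num) h48 (by norm_num)
  have h50 : 2 ^ 2119635264083268 % 17364052083370132981 = 7648351403097943402 := sq_step (by norm_num) h49 (by norm_num)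
  have h51 : 2 ^ 4239270528166536 % 17364052083370132981 = 14992620533713476429 := sq_step (by norm_num) h50 (by norm_num)
  have h52 : 2 ^ 8478541056333072 % 17364052083370132981 = 9654230472699879730 := sq_step (by norm_num) h51 (by norm_num)
  have h53 : 2 ^ 16957082112666145 % 17364052083370132981 = 6175804591750054195 := sqmul_step (by norm_num) h52 (by norm_num)
  have h54 : 2 ^ 33914164225332290 % 17364052083370132981 = 7890336075522391206 := sq_step (by norm_num) h53 (by norm_num)
  have h55 : 2 ^ 67828328450664581 % 17364052083370132981 = 913926089806663231 := sqmul_step (by norm_num) h54 (by norm_num)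
  have h56 : 2 ^ 135656656901329163 % 17364052083370132981 = 16814403616372221928 := sqmul_step (by norm_num) h55 (by norm_num)
  have h57 : 2 ^ 271313313802658327 % 17364052083370132981 = 16909085286572463681 := sqmul_step (by norm_num) h56 (by norm_num)
  have h58 : 2 ^ 542626627605316655 % 17364052083370132981 = 7584134541858700822 := sqmul_step (by norm_num) h57 (by norm_num)
  have h59 : 2 ^ 1085253255210633311 % 17364052083370132981 = 9366408019109587536 := sqmul_step (by norm_num) h58 (by norm_num)
  have h60 : 2 ^ 2170506510421266622 % 17364052083370132981 = 6345604776857402834 := sq_step (by norm_num) h59 (by norm_num)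
  have h61 : 2 ^ 4341013020842533245 % 17364052083370132981 = 1401628689148398990 := sqmul_step (by norm_num) h60 (by norm_num)
  have h62 : 2 ^ 8682026041685066490 % 17364052083370132981 = 17364052083370132980 := sq_step (by norm_num) h61 (by norm_num)
  exact h62

private lemma chain1 : 4167019568 ^ 8682026041685066490 % 17364052083370132981 = 17364052083370132980 := by
  have h0 : 4167019568 ^ 1 % 17364052083370132981 = 4167019568 := by norm_num
  have h1 : 4167019568 ^ 3 % 17364052083370132981 = 3716119764121779205 := sqmul_step (by norm_num) h0 (by norm_num)
  have h2 : 4167019568 ^ 7 % 17364052083370132981 = 6029475454557203350 := sqmul_step (by norm_num) h1 (by norm_num)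
  have h3 : 4167019568 ^ 15 % 17364052083370132981 = 5977450106630090502 := sqmul_step (by norm_num) h2 (by norm_num)
  have h4 : 4167019568 ^ 30 % 17364052083370132981 = 16683734622034766395 := sq_step (by norm_num) h3 (by norm_num)
  have h5 : 4167019568 ^ 60 % 17364052083370132981 = 8340756322255603026 := sq_step (by norm_num) h4 (by norm_num)
  have h6 : 4167019568 ^ 120 % 17364052083370132981 = 2812943465841329954 := sq_step (by norm_num) h5 (by norm_num)
  have h7 : 4167019568 ^ 240 % 17364052083370132981 = 14532823486390158961 := sq_step (by norm_num) h6 (by norm_num)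
  have h8 : 4167019568 ^ 481 % 17364052083370132981 = 15760528977386995539 := sqmul_step (by norm_num) h7 (by norm_num)
  have h9 : 4167019568 ^ 963 % 17364052083370132981 = 12671225138812542334 := sqmul_step (by norm_num) h8 (by norm_num)
  have h10 : 4167019568 ^ 1927 % 17364052083370132981 = 3456923129880573867 := sqmul_step (by norm_num) h9 (by norm_num)
  have h11 : 4167019568 ^ 3855 % 17364052083370132981 = 10862598629801023247 := sqmul_step (by norm_num) h10 (by norm_num)
  have h12 : 4167019568 ^ 7711 % 17364052083370132981 = 1939973810007305988 := sqmul_step (by norm_num) h11 (by norm_num)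
  have h13 : 4167019568 ^ 15422 % 17364052083370132981 = 15231879357304402090 := sq_step (by norm_num) h12 (by norm_num)
  have h14 : 4167019568 ^ 30844 % 17364052083370132981 = 12936774704117275496 := sq_step (by norm_num) h13 (by norm_num)
  have h15 : 4167019568 ^ 61689 % 17364052083370132981 = 17347312636391274870 := sqmul_step (by norm_num) h14 (by norm_num)
  have h16 : 4167019568 ^ 123379 % 17364052083370132981 = 14147414011670895445 := sqmul_step (by norm_num) h15 (by norm_num)
  have h17 : 4167019568 ^ 246758 % 17364052083370132981 = 5424280871378362673 := sq_step (by norm_num) h16 (by norm_num)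
  have h18 : 4167019568 ^ 493516 % 17364052083370132981 = 8885391653702890811 := sq_step (by norm_num) h17 (by norm_num)
  have h19 : 4167019568 ^ 987032 % 17364052083370132981 = 5338998630034495863 := sq_step (by norm_num) h18 (by norm_num)
  have h20 : 4167019568 ^ 1974064 % 17364052083370132981 = 3603254217868278490 := sq_step (by norm_num) h19 (by norm_num)
  have h21 : 4167019568 ^ 3948128 % 17364052083370132981 = 11540012082483295707 := sq_step (by norm_num) h20 (by norm_num)
  have h22 : 4167019568 ^ 7896256 % 17364052083370132981 = 13122467674176346560 := sq_step (by norm_num) h21 (by norm_num)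
  have h23 : 4167019568 ^ 15792513 % 17364052083370132981 = 6804551067226742554 := sqmul_step (by norm_num) h22 (by norm_num)
  have h24 : 4167019568 ^ 31585026 % 17364052083370132981 = 14629785472115846165 := sq_step (by norm_num) h23 (by norm_num)
  have h25 : 4167019568 ^ 63170053 % 17364052083370132981 = 14269388485088301573 := sqmul_step (by norm_num) h24 (by norm_num)
  have h26 : 4167019568 ^ 126340106 % 17364052083370132981 = 6163733979270647107 := sq_step (by norm_num) h25 (by norm_num)
  have h27 : 4167019568 ^ 252680213 % 17364052083370132981 = 14664559621196255711 := sqmul_step (by norm_num) h26 (by norm_num)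
  have h28 : 4167019568 ^ 505360427 % 17364052083370132981 = 7682513904636197737 := sqmul_step (by norm_num) h27 (by norm_num)
  have h29 : 4167019568 ^ 1010720855 % 17364052083370132981 = 1886132085998779912 := sqmul_step (by norm_num) h28 (by norm_num)
  have h30 : 4167019568 ^ 2021441711 % 17364052083370132981 = 8324957992988399752 := sqmul_step (by norm_num) h29 (by norm_num)
  have h31 : 4167019568 ^ 4042883423 % 17364052083370132981 = 15057144908797082080 := sqmul_step (by norm_num) h30 (by norm_num)
  have h32 : 4167019568 ^ 8085766846 % 17364052083370132981 = 11740803960633311423 := sq_step (by norm_num) h31 (by norm_num)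
  have h33 : 4167019568 ^ 16171533692 % 17364052083370132981 = 11094985025431887149 := sq_step (by norm_num) h32 (by norm_num)
  have h34 : 4167019568 ^ 32343067384 % 17364052083370132981 = 6320786090426454212 := sq_step (by norm_num) h33 (by norm_num)
  have h35 : 4167019568 ^ 64686134768 % 17364052083370132981 = 12978872923089177183 := sq_step (by norm_num) h34 (by norm_num)
  have h36 : 4167019568 ^ 129372269536 % 17364052083370132981 = 11305400518662934091 := sq_step (by norm_num) h35 (by norm_num)
  have h37 : 4167019568 ^ 258744539072 % 17364052083370132981 = 4645067795126318963 := sq_step (by norm_num) h36 (by norm_num)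
  have h38 : 4167019568 ^ 517489078145 % 17364052083370132981 = 17021164177063042678 := sqmul_step (by norm_num) h37 (by norm_num)
  have h39 : 4167019568 ^ 1034978156290 % 17364052083370132981 = 129551194042551184 := sq_step (by norm_num) h38 (by norm_num)
  have h40 : 4167019568 ^ 2069956312581 % 17364052083370132981 = 17242395131153011136 := sqmul_step (by norm_num) h39 (by norm_num)
  have h41 : 4167019568 ^ 4139912625162 % 17364052083370132981 = 9127086485037234638 := sq_step (by norm_num) h40 (by norm_num)
  have h42 : 4167019568 ^ 8279825250325 % 17364052083370132981 = 12627084578010568940 := sqmul_step (by norm_num) h41 (by norm_num)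
  have h43 : 4167019568 ^ 16559650500650 % 17364052083370132981 = 14292196291248503248 := sq_step (by norm_num) h42 (by norm_num)
  have h44 : 4167019568 ^ 33119301001301 % 17364052083370132981 = 9105931664538173015 := sqmul_step (by norm_num) h43 (by norm_num)
  have h45 : 4167019568 ^ 66238602002602 % 17364052083370132981 = 13778258572118532041 := sq_step (by norm_num) h44 (by norm_num)
  have h46 : 4167019568 ^ 132477204005204 % 17364052083370132981 = 15895980129783629337 := sq_step (by norm_num) h45 (by norm_num)
  have h47 : 4167019568 ^ 264954408010408 % 17364052083370132981 = 13323156704648530149 := sq_step (by norm_num) h46 (by norm_num)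
  have h48 : 4167019568 ^ 529908816020817 % 17364052083370132981 = 9516900773966627960 := sqmul_step (by norm_num) h47 (by norm_num)
  have h49 : 4167019568 ^ 1059817632041634 % 17364052083370132981 = 8987726872068641927 := sq_step (by norm_num) h48 (by norm_num)
  have h50 : 4167019568 ^ 2119635264083268 % 17364052083370132981 = 10291571240478909346 := sq_step (by norm_num) h49 (by norm_num)
  have h51 : 4167019568 ^ 4239270528166536 % 17364052083370132981 = 15050872476517610366 := sq_step (by norm_num) h50 (by norm_num)
  have h52 : 4167019568 ^ 8478541056333072 % 17364052083370132981 = 5070730565494812248 := sq_step (by norm_num) h51 (by norm_num)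
  have h53 : 4167019568 ^ 16957082112666145 % 17364052083370132981 = 6229967840717567805 := sqmul_step (by norm_num) h52 (by norm_num)
  have h54 : 4167019568 ^ 33914164225332290 % 17364052083370132981 = 17163320317126855114 := sq_step (by norm_num) h53 (by norm_num)
  have h55 : 4167019568 ^ 67828328450664581 % 17364052083370132981 = 5242535497363111086 := sqmul_step (by norm_num) h54 (by norm_num)
  have h56 : 4167019568 ^ 135656656901329163 % 17364052083370132981 = 9554769952758393848 := sqmul_step (by norm_num) h55 (by norm_num)
  have h57 : 4167019568 ^ 271313313802658327 % 17364052083370132981 = 2232838421495865900 := sqmul_step (by norm_num) h56 (by norm_num)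
  have h58 : 4167019568 ^ 542626627605316655 % 17364052083370132981 = 9090069839627217880 := sqmul_step (by norm_num) h57 (by norm_num)
  have h59 : 4167019568 ^ 1085253255210633311 % 17364052083370132981 = 6214300279181260922 := sqmul_step (by norm_num) h58 (by norm_num)
  have h60 : 4167019568 ^ 2170506510421266622 % 17364052083370132981 = 10392739165022043705 := sq_step (by norm_num) h59 (by norm_num)
  have h61 : 4167019568 ^ 4341013020842533245 % 17364052083370132981 = 7577492983336013596 := sqmul_step (by norm_num) h60 (by norm_num)
  have h62 : 4167019568 ^ 8682026041685066490 % 17364052083370132981 = 17364052083370132980 := sq_step (by norm_num) h61 (by norm_num)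
  exact h62

private lemma chain2 : 4167019569 ^ 8682026041685066490 % 17364052083370132981 = 17364052083370132980 := by
  have h0 : 4167019569 ^ 1 % 17364052083370132981 = 4167019569 := by norm_num
  have h1 : 4167019569 ^ 3 % 17364052083370132981 = 3716119766797158839 := sqmul_step (by norm_num) h0 (by norm_num)
  have h2 : 4167019569 ^ 7 % 17364052083370132981 = 6190170474241359989 := sqmul_step (by norm_num) h1 (by norm_num)
  have h3 : 4167019569 ^ 15 % 17364052083370132981 = 7524699211856773654 := sqmul_step (by norm_num) h2 (by norm_num)
  have h4 : 4167019569 ^ 30 % 17364052083370132981 = 10309764606727130534 := sq_step (by norm_num) h3 (by norm_num)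
  have h5 : 4167019569 ^ 60 % 17364052083370132981 = 12407326847508508678 := sq_step (by norm_num) h4 (by norm_num)
  have h6 : 4167019569 ^ 120 % 17364052083370132981 = 16919206495879751905 := sq_step (by norm_num) h5 (by norm_num)
  have h7 : 4167019569 ^ 240 % 17364052083370132981 = 12136078038337768166 := sq_step (by norm_num) h6 (by norm_num)
  have h8 : 4167019569 ^ 481 % 17364052083370132981 = 6141661537420146921 := sqmul_step (by norm_num) h7 (by norm_num)
  have h9 : 4167019569 ^ 963 % 17364052083370132981 = 16713343022875849755 := sqmul_step (by norm_num) h8 (by norm_num)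
  have h10 : 4167019569 ^ 1927 % 17364052083370132981 = 4704708448399484563 := sqmul_step (by norm_num) h9 (by norm_num)
  have h11 : 4167019569 ^ 3855 % 17364052083370132981 = 6558033514963244050 := sqmul_step (by norm_num) h10 (by norm_num)
  have h12 : 4167019569 ^ 7711 % 17364052083370132981 = 2261683321761037588 := sqmul_step (by norm_num) h11 (by norm_num)
  have h13 : 4167019569 ^ 15422 % 17364052083370132981 = 7114225216695184764 := sq_step (by norm_num) h12 (by norm_num)
  have h14 : 4167019569 ^ 30844 % 17364052083370132981 = 12151399951154925631 := sq_step (by norm_num) h13 (by norm_num)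
  have h15 : 4167019569 ^ 61689 % 17364052083370132981 = 9731622807405066739 := sqmul_step (by norm_num) h14 (by norm_num)
  have h16 : 4167019569 ^ 123379 % 17364052083370132981 = 12910616846900310050 := sqmul_step (by norm_num) h15 (by norm_num)
  have h17 : 4167019569 ^ 246758 % 17364052083370132981 = 7431396049965161206 := sq_step (by norm_num) h16 (by norm_num)
  have h18 : 4167019569 ^ 493516 % 17364052083370132981 = 10540543383246055725 := sq_step (by norm_num) h17 (by norm_num)
  have h19 : 4167019569 ^ 987032 % 17364052083370132981 = 1988729203052125092 := sq_step (by norm_num) h18 (by norm_num)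
  have h20 : 4167019569 ^ 1974064 % 17364052083370132981 = 2627953857712554180 := sq_step (by norm_num) h19 (by norm_num)
  have h21 : 4167019569 ^ 3948128 % 17364052083370132981 = 8612799320256847960 := sq_step (by norm_num) h20 (by norm_num)
  have h22 : 4167019569 ^ 7896256 % 17364052083370132981 = 12002117866883522935 := sq_step (by norm_num) h21 (by norm_num)
  have h23 : 4167019569 ^ 15792513 % 17364052083370132981 = 12795330388552893046 := sqmul_step (by norm_num) h22 (by norm_num)
  have h24 : 4167019569 ^ 31585026 % 17364052083370132981 = 10880394789421945823 := sq_step (by norm_num) h23 (by norm_num)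
  have h25 : 4167019569 ^ 63170053 % 17364052083370132981 = 4887541694610935318 := sqmul_step (by norm_num) h24 (by norm_num)
  have h26 : 4167019569 ^ 126340106 % 17364052083370132981 = 14211332684265858135 := sq_step (by norm_num) h25 (by norm_num)
  have h27 : 4167019569 ^ 252680213 % 17364052083370132981 = 2984815227887672587 := sqmul_step (by norm_num) h26 (by norm_num)
  have h28 : 4167019569 ^ 505360427 % 17364052083370132981 = 9126399724598823342 := sqmul_step (by norm_num) h27 (by norm_num)
  have h29 : 4167019569 ^ 1010720855 % 17364052083370132981 = 13117080880557791085 := sqmul_step (by norm_num) h28 (by norm_num)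
  have h30 : 4167019569 ^ 2021441711 % 17364052083370132981 = 2994363062087891285 := sqmul_step (by norm_num) h29 (by norm_num)
  have h31 : 4167019569 ^ 4042883423 % 17364052083370132981 = 6126940502827481212 := sqmul_step (by norm_num) h30 (by norm_num)
  have h32 : 4167019569 ^ 8085766846 % 17364052083370132981 = 6973793150961542599 := sq_step (by norm_num) h31 (by norm_num)
  have h33 : 4167019569 ^ 16171533692 % 17364052083370132981 = 6663126295771608017 := sq_step (by norm_num) h32 (by norm_num)
  have h34 : 4167019569 ^ 32343067384 % 17364052083370132981 = 10514061497867614059 := sq_step (by norm_num) h33 (by norm_num)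
  have h35 : 4167019569 ^ 64686134768 % 17364052083370132981 = 12074139055235177162 := sq_step (by norm_num) h34 (by norm_num)
  have h36 : 4167019569 ^ 129372269536 % 17364052083370132981 = 1959723842852525183 := sq_step (by norm_num) h35 (by norm_num)
  have h37 : 4167019569 ^ 258744539072 % 17364052083370132981 = 6295865511265337486 := sq_step (by norm_num) h36 (by norm_num)
  have h38 : 4167019569 ^ 517489078145 % 17364052083370132981 = 12160037180270302245 := sqmul_step (by norm_num) h37 (by norm_num)
  have h39 : 4167019569 ^ 1034978156290 % 17364052083370132981 = 8863937420686856018 := sq_step (by norm_num) h38 (by norm_num)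
  have h40 : 4167019569 ^ 2069956312581 % 17364052083370132981 = 1166920818577875533 := sqmul_step (by norm_num) h39 (by norm_num)
  have h41 : 4167019569 ^ 4139912625162 % 17364052083370132981 = 6524427278447193439 := sq_step (by norm_num) h40 (by norm_num)
  have h42 : 4167019569 ^ 8279825250325 % 17364052083370132981 = 1042538212377440245 := sqmul_step (by norm_num) h41 (by norm_num)
  have h43 : 4167019569 ^ 16559650500650 % 17364052083370132981 = 14315181280480477619 := sq_step (by norm_num) h42 (by norm_num)
  have h44 : 4167019569 ^ 33119301001301 % 17364052083370132981 = 5304402975877687934 := sqmul_step (by norm_num) h43 (by norm_num)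
  have h45 : 4167019569 ^ 66238602002602 % 17364052083370132981 = 3473550085869750987 := sq_step (by norm_num) h44 (by norm_num)
  have h46 : 4167019569 ^ 132477204005204 % 17364052083370132981 = 16784710290299647308 := sq_step (by norm_num) h45 (by norm_num)
  have h47 : 4167019569 ^ 264954408010408 % 17364052083370132981 = 3623884864713668505 := sq_step (by norm_num) h46 (by norm_num)
  have h48 : 4167019569 ^ 529908816020817 % 17364052083370132981 = 634480433590885618 := sqmul_step (by norm_num) h47 (by norm_num)
  have h49 : 4167019569 ^ 1059817632041634 % 17364052083370132981 = 2630618358430503462 := sq_step (by norm_num) h48 (by norm_num)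
  have h50 : 4167019569 ^ 2119635264083268 % 17364052083370132981 = 6306996313447584042 := sq_step (by norm_num) h49 (by norm_num)
  have h51 : 4167019569 ^ 4239270528166536 % 17364052083370132981 = 15170500047760336099 := sq_step (by norm_num) h50 (by norm_num)
  have h52 : 4167019569 ^ 8478541056333072 % 17364052083370132981 = 14409467674734452347 := sq_step (by norm_num) h51 (by norm_num)
  have h53 : 4167019569 ^ 16957082112666145 % 17364052083370132981 = 15387711148320232454 := sqmul_step (by norm_num) h52 (by norm_num)
  have h54 : 4167019569 ^ 33914164225332290 % 17364052083370132981 = 9020448042626307282 := sq_step (by norm_num) h53 (by norm_num)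
  have h55 : 4167019569 ^ 67828328450664581 % 17364052083370132981 = 11728804455850420853 := sqmul_step (by norm_num) h54 (by norm_num)
  have h56 : 4167019569 ^ 135656656901329163 % 17364052083370132981 = 2032964377922188935 := sqmul_step (by norm_num) h55 (by norm_num)
  have h57 : 4167019569 ^ 271313313802658327 % 17364052083370132981 = 7115716907675932066 := sqmul_step (by norm_num) h56 (by norm_num)
  have h58 : 4167019569 ^ 542626627605316655 % 17364052083370132981 = 7302595743253131938 := sqmul_step (by norm_num) h57 (by norm_num)
  have h59 : 4167019569 ^ 1085253255210633311 % 17364052083370132981 = 15429930573159587231 := sqmul_step (by norm_num) h58 (by norm_num)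
  have h60 : 4167019569 ^ 2170506510421266622 % 17364052083370132981 = 8751291609179646057 := sq_step (by norm_num) h59 (by norm_num)
  have h61 : 4167019569 ^ 4341013020842533245 % 17364052083370132981 = 1401628689148398990 := sqmul_step (by norm_num) h60 (by norm_num)
  have h62 : 4167019569 ^ 8682026041685066490 % 17364052083370132981 = 17364052083370132980 := sq_step (by norm_num) h61 (by norm_num)
  exact h62

private lemma chain3 : 2946527794 ^ 8682026041685066490 % 17364052083370132981 = 17364052083370132980 := by
  have h0 : 2946527794 ^ 1 % 17364052083370132981 = 2946527794 := by norm_num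
  have h1 : 2946527794 ^ 3 % 17364052083370132981 = 14798922686439728208 := sqmul_step (by norm_num) h0 (by norm_num)
  have h2 : 2946527794 ^ 7 % 17364052083370132981 = 17130436311866672173 := sqmul_step (by norm_num) h1 (by norm_num)
  have h3 : 2946527794 ^ 15 % 17364052083370132981 = 7990536973647565685 := sqmul_step (by norm_num) h2 (by norm_num)
  have h4 : 2946527794 ^ 30 % 17364052083370132981 = 6925761781186225536 := sq_step (by norm_num) h3 (by norm_num)
  have h5 : 2946527794 ^ 60 % 17364052083370132981 = 12947110146059448574 := sq_step (by norm_num) h4 (by norm_num)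
  have h6 : 2946527794 ^ 120 % 17364052083370132981 = 9323871661363044175 := sq_step (by norm_num) h5 (by norm_num)
  have h7 : 2946527794 ^ 240 % 17364052083370132981 = 12114520598971867879 := sq_step (by norm_num) h6 (by norm_num)
  have h8 : 2946527794 ^ 481 % 17364052083370132981 = 7149601799556764521 := sqmul_step (by norm_num) h7 (by norm_num)
  have h9 : 2946527794 ^ 963 % 17364052083370132981 = 11094773092147715708 := sqmul_step (by norm_num) h8 (by norm_num)
  have h10 : 2946527794 ^ 1927 % 17364052083370132981 = 4537337636694989995 := sqmul_step (by norm_num) h9 (by norm_num)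
  have h11 : 2946527794 ^ 3855 % 17364052083370132981 = 12986255810796747241 := sqmul_step (by norm_num) h10 (by norm_num)
  have h12 : 2946527794 ^ 7711 % 17364052083370132981 = 9602910743433836722 := sqmul_step (by norm_num) h11 (by norm_num)
  have h13 : 2946527794 ^ 15422 % 17364052083370132981 = 10464751069998657235 := sq_step (by norm_num) h12 (by norm_num)
  have h14 : 2946527794 ^ 30844 % 17364052083370132981 = 1941987297151156322 := sq_step (by norm_num) h13 (by norm_num)
  have h15 : 2946527794 ^ 61689 % 17364052083370132981 = 8797813328659218653 := sqmul_step (by norm_num) h14 (by norm_num)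
  have h16 : 2946527794 ^ 123379 % 17364052083370132981 = 17089851262274608796 := sqmul_step (by norm_num) h15 (by norm_num)
  have h17 : 2946527794 ^ 246758 % 17364052083370132981 = 16311414838862128183 := sq_step (by norm_num) h16 (by norm_num)
  have h18 : 2946527794 ^ 493516 % 17364052083370132981 = 3948455651947055298 := sq_step (by norm_num) h17 (by norm_num)
  have h19 : 2946527794 ^ 987032 % 17364052083370132981 = 6499017199734246255 := sq_step (by norm_num) h18 (by norm_num)
  have h20 : 2946527794 ^ 1974064 % 17364052083370132981 = 922979921339297448 := sq_step (by norm_num) h19 (by norm_num)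
  have h21 : 2946527794 ^ 3948128 % 17364052083370132981 = 4880053224686275127 := sq_step (by norm_num) h20 (by norm_num)
  have h22 : 2946527794 ^ 7896256 % 17364052083370132981 = 362666810312715220 := sq_step (by norm_num) h21 (by norm_num)
  have h23 : 2946527794 ^ 15792513 % 17364052083370132981 = 6204952404508837626 := sqmul_step (by norm_num) h22 (by norm_num)
  have h24 : 2946527794 ^ 31585026 % 17364052083370132981 = 5777886778988020175 := sq_step (by norm_num) h23 (by norm_num)
  have h25 : 2946527794 ^ 63170053 % 17364052083370132981 = 8898989235259617282 := sqmul_step (by norm_num) h24 (by norm_num)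
  have h26 : 2946527794 ^ 126340106 % 17364052083370132981 = 8181936414041169144 := sq_step (by norm_num) h25 (by norm_num)
  have h27 : 2946527794 ^ 252680213 % 17364052083370132981 = 6932125652347003433 := sqmul_step (by norm_num) h26 (by norm_num)
  have h28 : 2946527794 ^ 505360427 % 17364052083370132981 = 1489317530463697686 := sqmul_step (by norm_num) h27 (by norm_num)
  have h29 : 2946527794 ^ 1010720855 % 17364052083370132981 = 3267254371223949581 := sqmul_step (by norm_num) h28 (by norm_num)
  have h30 : 2946527794 ^ 2021441711 % 17364052083370132981 = 2507202511224716066 := sqmul_step (by norm_num) h29 (by norm_num)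
  have h31 : 2946527794 ^ 4042883423 % 17364052083370132981 = 15153833899037076825 := sqmul_step (by norm_num) h30 (by norm_num)
  have h32 : 2946527794 ^ 8085766846 % 17364052083370132981 = 14037302710061572411 := sq_step (by norm_num) h31 (by norm_num)
  have h33 : 2946527794 ^ 16171533692 % 17364052083370132981 = 2323211087069806326 := sq_step (by norm_num) h32 (by norm_num)
  have h34 : 2946527794 ^ 32343067384 % 17364052083370132981 = 13708780440601603715 := sq_step (by norm_num) h33 (by norm_num)
  have h35 : 2946527794 ^ 64686134768 % 17364052083370132981 = 7119717121130171866 := sq_step (by norm_num) h34 (by norm_num)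
  have h36 : 2946527794 ^ 129372269536 % 17364052083370132981 = 12384284286244944998 := sq_step (by norm_num) h35 (by norm_num)
  have h37 : 2946527794 ^ 258744539072 % 17364052083370132981 = 13042609400269568383 := sq_step (by norm_num) h36 (by norm_num)
  have h38 : 2946527794 ^ 517489078145 % 17364052083370132981 = 14032633683675339563 := sqmul_step (by norm_num) h37 (by norm_num)
  have h39 : 2946527794 ^ 1034978156290 % 17364052083370132981 = 4083934786279380274 := sq_step (by norm_num) h38 (by norm_num)
  have h40 : 2946527794 ^ 2069956312581 % 17364052083370132981 = 9185561718917058185 := sqmul_step (by norm_num) h39 (by norm_num)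
  have h41 : 2946527794 ^ 4139912625162 % 17364052083370132981 = 8805224196308268551 := sq_step (by norm_num) h40 (by norm_num)
  have h42 : 2946527794 ^ 8279825250325 % 17364052083370132981 = 5945302588918286145 := sqmul_step (by norm_num) h41 (by norm_num)
  have h43 : 2946527794 ^ 16559650500650 % 17364052083370132981 = 1244609522701617825 := sq_step (by norm_num) h42 (by norm_num)
  have h44 : 2946527794 ^ 33119301001301 % 17364052083370132981 = 11519265804108906195 := sqmul_step (by norm_num) h43 (by norm_num)
  have h45 : 2946527794 ^ 66238602002602 % 17364052083370132981 = 11726404493433918014 := sq_step (by norm_num) h44 (by norm_num)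
  have h46 : 2946527794 ^ 132477204005204 % 17364052083370132981 = 9692082354778208825 := sq_step (by norm_num) h45 (by norm_num)
  have h47 : 2946527794 ^ 264954408010408 % 17364052083370132981 = 5299107995669785537 := sq_step (by norm_num) h46 (by norm_num)
  have h48 : 2946527794 ^ 529908816020817 % 17364052083370132981 = 2661246298695226567 := sqmul_step (by norm_num) h47 (by norm_num)
  have h49 : 2946527794 ^ 1059817632041634 % 17364052083370132981 = 16146592214972923253 := sq_step (by norm_num) h48 (by norm_num)
  have h50 : 2946527794 ^ 2119635264083268 % 17364052083370132981 = 9914528080744876910 := sq_step (by norm_num) h49 (by norm_num)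
  have h51 : 2946527794 ^ 4239270528166536 % 17364052083370132981 = 11588443759054287024 := sq_step (by norm_num) h50 (by norm_num)
  have h52 : 2946527794 ^ 8478541056333072 % 17364052083370132981 = 18049711114538560 := sq_step (by norm_num) h51 (by norm_num)
  have h53 : 2946527794 ^ 16957082112666145 % 17364052083370132981 = 16160028902384544236 := sqmul_step (by norm_num) h52 (by norm_num)
  have h54 : 2946527794 ^ 33914164225332290 % 17364052083370132981 = 3986210397711127636 := sq_step (by norm_num) h53 (by norm_num)
  have h55 : 2946527794 ^ 67828328450664581 % 17364052083370132981 = 3706660287011951284 := sqmul_step (by norm_num) h54 (by norm_num)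
  have h56 : 2946527794 ^ 135656656901329163 % 17364052083370132981 = 10504661596087783996 := sqmul_step (by norm_num) h55 (by norm_num)
  have h57 : 2946527794 ^ 271313313802658327 % 17364052083370132981 = 1060910506707488332 := sqmul_step (by norm_num) h56 (by norm_num)
  have h58 : 2946527794 ^ 542626627605316655 % 17364052083370132981 = 3836991096941064875 := sqmul_step (by norm_num) h57 (by norm_num)
  have h59 : 2946527794 ^ 1085253255210633311 % 17364052083370132981 = 1907188103533141745 := sqmul_step (by norm_num) h58 (by norm_num)
  have h60 : 2946527794 ^ 2170506510421266622 % 17364052083370132981 = 4422851848963161960 := sq_step (by norm_num) h59 (by norm_num)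
  have h61 : 2946527794 ^ 4341013020842533245 % 17364052083370132981 = 9786559100034119385 := sqmul_step (by norm_num) h60 (by norm_num)
  have h62 : 2946527794 ^ 8682026041685066490 % 17364052083370132981 = 17364052083370132980 := sq_step (by norm_num) h61 (by norm_num)
  exact h62

private lemma chain4 : 2946527795 ^ 8682026041685066490 % 17364052083370132981 = 17364052083370132980 := by
  have h0 : 2946527795 ^ 1 % 17364052083370132981 = 2946527795 := by norm_num
  have h1 : 2946527795 ^ 3 % 17364052083370132981 = 6116896650982564937 := sqmul_step (by norm_num) h0 (by norm_num)
  have h2 : 2946527795 ^ 7 % 17364052083370132981 = 3136357069776591565 := sqmul_step (by norm_num) h1 (by norm_num)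
  have h3 : 2946527795 ^ 15 % 17364052083370132981 = 16535194859905212115 := sqmul_step (by norm_num) h2 (by norm_num)
  have h4 : 2946527795 ^ 30 % 17364052083370132981 = 765296492007313480 := sq_step (by norm_num) h3 (by norm_num)
  have h5 : 2946527795 ^ 60 % 17364052083370132981 = 9221756482575332334 := sq_step (by norm_num) h4 (by norm_num)
  have h6 : 2946527795 ^ 120 % 17364052083370132981 = 709898701022684149 := sq_step (by norm_num) h5 (by norm_num)
  have h7 : 2946527795 ^ 240 % 17364052083370132981 = 9482443002627879650 := sq_step (by norm_num) h6 (by norm_num)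
  have h8 : 2946527795 ^ 481 % 17364052083370132981 = 17206543657657611404 := sqmul_step (by norm_num) h7 (by norm_num)
  have h9 : 2946527795 ^ 963 % 17364052083370132981 = 4771059470673571343 := sqmul_step (by norm_num) h8 (by norm_num)
  have h10 : 2946527795 ^ 1927 % 17364052083370132981 = 2009504551213228755 := sqmul_step (by norm_num) h9 (by norm_num)
  have h11 : 2946527795 ^ 3855 % 17364052083370132981 = 15332140233264356785 := sqmul_step (by norm_num) h10 (by norm_num)
  have h12 : 2946527795 ^ 7711 % 17364052083370132981 = 16141783749201292636 := sqmul_step (by norm_num) h11 (by norm_num)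
  have h13 : 2946527795 ^ 15422 % 17364052083370132981 = 12169591650449118117 := sq_step (by norm_num) h12 (by norm_num)
  have h14 : 2946527795 ^ 30844 % 17364052083370132981 = 6227404269295381427 := sq_step (by norm_num) h13 (by norm_num)
  have h15 : 2946527795 ^ 61689 % 17364052083370132981 = 1133375866368750568 := sqmul_step (by norm_num) h14 (by norm_num)
  have h16 : 2946527795 ^ 123379 % 17364052083370132981 = 10656227052980880573 := sqmul_step (by norm_num) h15 (by norm_num)
  have h17 : 2946527795 ^ 246758 % 17364052083370132981 = 15139317858183498937 := sq_step (by norm_num) h16 (by norm_num)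
  have h18 : 2946527795 ^ 493516 % 17364052083370132981 = 529346368461085811 := sq_step (by norm_num) h17 (by norm_num)
  have h19 : 2946527795 ^ 987032 % 17364052083370132981 = 707238554943102420 := sq_step (by norm_num) h18 (by norm_num)
  have h20 : 2946527795 ^ 1974064 % 17364052083370132981 = 188618752308606048 := sq_step (by norm_num) h19 (by norm_num)
  have h21 : 2946527795 ^ 3948128 % 17364052083370132981 = 14200490637532283321 := sq_step (by norm_num) h20 (by norm_num)
  have h22 : 2946527795 ^ 7896256 % 17364052083370132981 = 8856181996909953801 := sq_step (by norm_num) h21 (by norm_num)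
  have h23 : 2946527795 ^ 15792513 % 17364052083370132981 = 16080664958670063922 := sqmul_step (by norm_num) h22 (by norm_num)
  have h24 : 2946527795 ^ 31585026 % 17364052083370132981 = 5155580404665485546 := sq_step (by norm_num) h23 (by norm_num)
  have h25 : 2946527795 ^ 63170053 % 17364052083370132981 = 1643864607662258133 := sqmul_step (by norm_num) h24 (by norm_num)
  have h26 : 2946527795 ^ 126340106 % 17364052083370132981 = 15856124756176472935 := sq_step (by norm_num) h25 (by norm_num)
  have h27 : 2946527795 ^ 252680213 % 17364052083370132981 = 14183745185739412778 := sqmul_step (by norm_num) h26 (by norm_num)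
  have h28 : 2946527795 ^ 505360427 % 17364052083370132981 = 6356028426721694603 := sqmul_step (by norm_num) h27 (by norm_num)
  have h29 : 2946527795 ^ 1010720855 % 17364052083370132981 = 1301427230769987425 := sqmul_step (by norm_num) h28 (by norm_num)
  have h30 : 2946527795 ^ 2021441711 % 17364052083370132981 = 10698496592821225584 := sqmul_step (by norm_num) h29 (by norm_num)
  have h31 : 2946527795 ^ 4042883423 % 17364052083370132981 = 9096627674699399667 := sqmul_step (by norm_num) h30 (by norm_num)
  have h32 : 2946527795 ^ 8085766846 % 17364052083370132981 = 3677582672813010249 := sq_step (by norm_num) h31 (by norm_num)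
  have h33 : 2946527795 ^ 16171533692 % 17364052083370132981 = 918768903795460320 := sq_step (by norm_num) h32 (by norm_num)
  have h34 : 2946527795 ^ 32343067384 % 17364052083370132981 = 3825192926978430566 := sq_step (by norm_num) h33 (by norm_num)
  have h35 : 2946527795 ^ 64686134768 % 17364052083370132981 = 9605549313729862972 := sq_step (by norm_num) h34 (by norm_num)
  have h36 : 2946527795 ^ 129372269536 % 17364052083370132981 = 14369163919590502597 := sq_step (by norm_num) h35 (by norm_num)
  have h37 : 2946527795 ^ 258744539072 % 17364052083370132981 = 5857244533107601385 := sq_step (by norm_num) h36 (by norm_num)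
  have h38 : 2946527795 ^ 517489078145 % 17364052083370132981 = 17186947107708171351 := sqmul_step (by norm_num) h37 (by norm_num)
  have h39 : 2946527795 ^ 1034978156290 % 17364052083370132981 = 15867027765109204000 := sq_step (by norm_num) h38 (by norm_num)
  have h40 : 2946527795 ^ 2069956312581 % 17364052083370132981 = 9124864022364257795 := sqmul_step (by norm_num) h39 (by norm_num)
  have h41 : 2946527795 ^ 4139912625162 % 17364052083370132981 = 9903811855660815117 := sq_step (by norm_num) h40 (by norm_num)
  have h42 : 2946527795 ^ 8279825250325 % 17364052083370132981 = 360634657091271100 := sqmul_step (by norm_num) h41 (by norm_num)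
  have h43 : 2946527795 ^ 16559650500650 % 17364052083370132981 = 3443427328637032635 := sq_step (by norm_num) h42 (by norm_num)
  have h44 : 2946527795 ^ 33119301001301 % 17364052083370132981 = 3894604953691248390 := sqmul_step (by norm_num) h43 (by norm_num)
  have h45 : 2946527795 ^ 66238602002602 % 17364052083370132981 = 16484023868341132938 := sq_step (by norm_num) h44 (by norm_num)
  have h46 : 2946527795 ^ 132477204005204 % 17364052083370132981 = 8105603069842104032 := sq_step (by norm_num) h45 (by norm_num)
  have h47 : 2946527795 ^ 264954408010408 % 17364052083370132981 = 6371879006086770142 := sq_step (by norm_num) h46 (by norm_num)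
  have h48 : 2946527795 ^ 529908816020817 % 17364052083370132981 = 3342133930757661847 := sqmul_step (by norm_num) h47 (by norm_num)
  have h49 : 2946527795 ^ 1059817632041634 % 17364052083370132981 = 3538101748270663637 := sq_step (by norm_num) h48 (by norm_num)
  have h50 : 2946527795 ^ 2119635264083268 % 17364052083370132981 = 9952858317485514297 := sq_step (by norm_num) h49 (by norm_num)
  have h51 : 2946527795 ^ 4239270528166536 % 17364052083370132981 = 8064610537710919047 := sq_step (by norm_num) h50 (by norm_num)
  have h52 : 2946527795 ^ 8478541056333072 % 17364052083370132981 = 4675737065061489567 := sq_step (by norm_num) h51 (by norm_num)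
  have h53 : 2946527795 ^ 16957082112666145 % 17364052083370132981 = 5556135548126898744 := sqmul_step (by norm_num) h52 (by norm_num)
  have h54 : 2946527795 ^ 33914164225332290 % 17364052083370132981 = 832379206374287460 := sq_step (by norm_num) h53 (by norm_num)
  have h55 : 2946527795 ^ 67828328450664581 % 17364052083370132981 = 2559425587759314254 := sqmul_step (by norm_num) h54 (by norm_num)
  have h56 : 2946527795 ^ 135656656901329163 % 17364052083370132981 = 2451429577183104089 := sqmul_step (by norm_num) h55 (by norm_num)
  have h57 : 2946527795 ^ 271313313802658327 % 17364052083370132981 = 10395537666065099470 := sqmul_step (by norm_num) h56 (by norm_num)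
  have h58 : 2946527795 ^ 542626627605316655 % 17364052083370132981 = 2681440097918452414 := sqmul_step (by norm_num) h57 (by norm_num)
  have h59 : 2946527795 ^ 1085253255210633311 % 17364052083370132981 = 10671766022670624081 := sqmul_step (by norm_num) h58 (by norm_num)
  have h60 : 2946527795 ^ 2170506510421266622 % 17364052083370132981 = 15591072374557201641 := sq_step (by norm_num) h59 (by norm_num)
  have h61 : 2946527795 ^ 4341013020842533245 % 17364052083370132981 = 8752089921027254266 := sqmul_step (by norm_num) h60 (by norm_num)
  have h62 : 2946527795 ^ 8682026041685066490 % 17364052083370132981 = 17364052083370132980 := sq_step (by norm_num) h61 (by norm_num)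
  exact h62

private lemma chain5 : 17 ^ 8682026041685066490 % 17364052083370132981 = 17364052083370132980 := by
  have h0 : 17 ^ 1 % 17364052083370132981 = 17 := by norm_num
  have h1 : 17 ^ 3 % 17364052083370132981 = 4913 := sqmul_step (by norm_num) h0 (by norm_num)
  have h2 : 17 ^ 7 % 17364052083370132981 = 410338673 := sqmul_step (by norm_num) h1 (by norm_num)
  have h3 : 17 ^ 15 % 17364052083370132981 = 2862423051509815793 := sqmul_step (by norm_num) h2 (by norm_num)
  have h4 : 17 ^ 30 % 17364052083370132981 = 5887741076367232889 := sq_step (by norm_num) h3 (by norm_num)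
  have h5 : 17 ^ 60 % 17364052083370132981 = 6642394504110688775 := sq_step (by norm_num) h4 (by norm_num)
  have h6 : 17 ^ 120 % 17364052083370132981 = 2009722265165679118 := sq_step (by norm_num) h5 (by norm_num)
  have h7 : 17 ^ 240 % 17364052083370132981 = 2423583173612820229 := sq_step (by norm_num) h6 (by norm_num)
  have h8 : 17 ^ 481 % 17364052083370132981 = 17247135122439987592 := sqmul_step (by norm_num) h7 (by norm_num)
  have h9 : 17 ^ 963 % 17364052083370132981 = 10569060720573011682 := sqmul_step (by norm_num) h8 (by norm_num)
  have h10 : 17 ^ 1927 % 17364052083370132981 = 11513161086648091491 := sqmul_step (by norm_num) h9 (by norm_num)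
  have h11 : 17 ^ 3855 % 17364052083370132981 = 7267173012790641959 := sqmul_step (by norm_num) h10 (by norm_num)
  have h12 : 17 ^ 7711 % 17364052083370132981 = 16779456112825880557 := sqmul_step (by norm_num) h11 (by norm_num)
  have h13 : 17 ^ 15422 % 17364052083370132981 = 1016474591431052615 := sq_step (by norm_num) h12 (by norm_num)
  have h14 : 17 ^ 30844 % 17364052083370132981 = 1045393669476704986 := sq_step (by norm_num) h13 (by norm_num)
  have h15 : 17 ^ 61689 % 17364052083370132981 = 15778480129287383981 := sqmul_step (by norm_num) h14 (by norm_num)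
  have h16 : 17 ^ 123379 % 17364052083370132981 = 12294196775466020921 := sqmul_step (by norm_num) h15 (by norm_num)
  have h17 : 17 ^ 246758 % 17364052083370132981 = 10471969433208039334 := sq_step (by norm_num) h16 (by norm_num)
  have h18 : 17 ^ 493516 % 17364052083370132981 = 10102811005336515601 := sq_step (by norm_num) h17 (by norm_num)
  have h19 : 17 ^ 987032 % 17364052083370132981 = 13736207703612232284 := sq_step (by norm_num) h18 (by norm_num)
  have h20 : 17 ^ 1974064 % 17364052083370132981 = 6581085699437551304 := sq_step (by norm_num) h19 (by norm_num)
  have h21 : 17 ^ 3948128 % 17364052083370132981 = 15071078740798511490 := sq_step (by norm_num) h20 (by norm_num)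
  have h22 : 17 ^ 7896256 % 17364052083370132981 = 4407632048923750637 := sq_step (by norm_num) h21 (by norm_num)
  have h23 : 17 ^ 15792513 % 17364052083370132981 = 4934182820592811610 := sqmul_step (by norm_num) h22 (by norm_num)
  have h24 : 17 ^ 31585026 % 17364052083370132981 = 3010257471207317820 := sq_step (by norm_num) h23 (by norm_num)
  have h25 : 17 ^ 63170053 % 17364052083370132981 = 2739961916140046316 := sqmul_step (by norm_num) h24 (by norm_num)
  have h26 : 17 ^ 126340106 % 17364052083370132981 = 2988231230096463098 := sq_step (by norm_num) h25 (by norm_num)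
  have h27 : 17 ^ 252680213 % 17364052083370132981 = 16658720319624197814 := sqmul_step (by norm_num) h26 (by norm_num)
  have h28 : 17 ^ 505360427 % 17364052083370132981 = 5489841702830205129 := sqmul_step (by norm_num) h27 (by norm_num)
  have h29 : 17 ^ 1010720855 % 17364052083370132981 = 2231605773033872014 := sqmul_step (by norm_num) h28 (by norm_num)
  have h30 : 17 ^ 2021441711 % 17364052083370132981 = 8021703300981610284 := sqmul_step (by norm_num) h29 (by norm_num)
  have h31 : 17 ^ 4042883423 % 17364052083370132981 = 16255432734922229365 := sqmul_step (by norm_num) h30 (by norm_num)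
  have h32 : 17 ^ 8085766846 % 17364052083370132981 = 10774162295638093668 := sq_step (by norm_num) h31 (by norm_num)
  have h33 : 17 ^ 16171533692 % 17364052083370132981 = 601986486344431724 := sq_step (by norm_num) h32 (by norm_num)
  have h34 : 17 ^ 32343067384 % 17364052083370132981 = 8297988440452828996 := sq_step (by norm_num) h33 (by norm_num)
  have h35 : 17 ^ 64686134768 % 17364052083370132981 = 2672430833005337150 := sq_step (by norm_num) h34 (by norm_num)
  have h36 : 17 ^ 129372269536 % 17364052083370132981 = 9536626708996196027 := sq_step (by norm_num) h35 (by norm_num)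
  have h37 : 17 ^ 258744539072 % 17364052083370132981 = 15178799443156494966 := sq_step (by norm_num) h36 (by norm_num)
  have h38 : 17 ^ 517489078145 % 17364052083370132981 = 16492246150327565466 := sqmul_step (by norm_num) h37 (by norm_num)
  have h39 : 17 ^ 1034978156290 % 17364052083370132981 = 11836501706015358167 := sq_step (by norm_num) h38 (by norm_num)
  have h40 : 17 ^ 2069956312581 % 17364052083370132981 = 16453301364792921115 := sqmul_step (by norm_num) h39 (by norm_num)
  have h41 : 17 ^ 4139912625162 % 17364052083370132981 = 5350480219197190240 := sq_step (by norm_num) h40 (by norm_num)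
  have h42 : 17 ^ 8279825250325 % 17364052083370132981 = 8006634147438827000 := sqmul_step (by norm_num) h41 (by norm_num)
  have h43 : 17 ^ 16559650500650 % 17364052083370132981 = 11143289176194024077 := sq_step (by norm_num) h42 (by norm_num)
  have h44 : 17 ^ 33119301001301 % 17364052083370132981 = 13724573725751151225 := sqmul_step (by norm_num) h43 (by norm_num)
  have h45 : 17 ^ 66238602002602 % 17364052083370132981 = 14442488521192517994 := sq_step (by norm_num) h44 (by norm_num)
  have h46 : 17 ^ 132477204005204 % 17364052083370132981 = 3181618249740245263 := sq_step (by norm_num) h45 (by norm_num)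
  have h47 : 17 ^ 264954408010408 % 17364052083370132981 = 17004718635711777843 := sq_step (by norm_num) h46 (by norm_num)
  have h48 : 17 ^ 529908816020817 % 17364052083370132981 = 8868215138334077865 := sqmul_step (by norm_num) h47 (by norm_num)
  have h49 : 17 ^ 1059817632041634 % 17364052083370132981 = 1362838048052495177 := sq_step (by norm_num) h48 (by norm_num)
  have h50 : 17 ^ 2119635264083268 % 17364052083370132981 = 13187512362665094413 := sq_step (by norm_num) h49 (by norm_num)
  have h51 : 17 ^ 4239270528166536 % 17364052083370132981 = 7805804291206247915 := sq_step (by norm_num) h50 (by norm_num)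
  have h52 : 17 ^ 8478541056333072 % 17364052083370132981 = 4277981858586443583 := sq_step (by norm_num) h51 (by norm_num)
  have h53 : 17 ^ 16957082112666145 % 17364052083370132981 = 500205080836606409 := sqmul_step (by norm_num) h52 (by norm_num)
  have h54 : 17 ^ 33914164225332290 % 17364052083370132981 = 4734705191039756707 := sq_step (by norm_num) h53 (by norm_num)
  have h55 : 17 ^ 67828328450664581 % 17364052083370132981 = 403936904553501568 := sqmul_step (by norm_num) h54 (by norm_num)
  have h56 : 17 ^ 135656656901329163 % 17364052083370132981 = 15227667346343022329 := sqmul_step (by norm_num) h55 (by norm_num)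
  have h57 : 17 ^ 271313313802658327 % 17364052083370132981 = 12646344666866748416 := sqmul_step (by norm_num) h56 (by norm_num)
  have h58 : 17 ^ 542626627605316655 % 17364052083370132981 = 9332408890321375037 := sqmul_step (by norm_num) h57 (by norm_num)
  have h59 : 17 ^ 1085253255210633311 % 17364052083370132981 = 16281656037303058300 := sqmul_step (by norm_num) h58 (by norm_num)
  have h60 : 17 ^ 2170506510421266622 % 17364052083370132981 = 4972321613634060439 := sq_step (by norm_num) h59 (by norm_num)
  have h61 : 17 ^ 4341013020842533245 % 17364052083370132981 = 2576225626839639660 := sqmul_step (by norm_num) h60 (by norm_num)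
  have h62 : 17 ^ 8682026041685066490 % 17364052083370132981 = 17364052083370132980 := sq_step (by norm_num) h61 (by norm_num)
  exact h62


private lemma zmod_neg_one {a : ℕ} (h : a ^ 8682026041685066490 % 17364052083370132981 = 17364052083370132980) :
    (a : ZMod 17364052083370132981) ^ 8682026041685066490 = -1 := by
  have h2 : ((17364052083370132980 : ℕ) : ZMod 17364052083370132981) = -1 := by
    have hN : ((17364052083370132981 : ℕ) : ZMod 17364052083370132981) = 0 := ZMod.natCast_self _
    have he : (17364052083370132980 : ℕ) = 17364052083370132981 - 1 := by norm_num
    rw [he, Nat.cast_sub (by norm_num), hN, Nat.cast_one, zero_sub]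
  rw [← Nat.cast_pow, ← ZMod.natCast_mod (a ^ 8682026041685066490) 17364052083370132981, h]
  exact h2


private lemma spp_of_chain {a : ℕ} (h : (a : ZMod 17364052083370132981) ^ 8682026041685066490 = -1) :
    StrongProbablePrime 17364052083370132981 a := by
  refine ⟨2, 4341013020842533245, by decide, by norm_num, Or.inr ⟨1, by norm_num, ?_⟩⟩
  have : 2 ^ 1 * 4341013020842533245 = 8682026041685066490 := by norm_num
  rw [this, h]

theorem pseudoprime_17364052083370132981 :
    (17364052083370132981 : ℕ) = 548893 * 1646677 * 19211221 ∧
    ¬ (17364052083370132981 : ℕ).Prime ∧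
    (∀ a ∈ ({2, Nat.sqrt 17364052083370132981, Nat.sqrt 17364052083370132981 + 1,
        Nat.sqrt (17364052083370132981 / 2),
        Nat.sqrt (17364052083370132981 / 2) + 1} : Finset ℕ),
      StrongProbablePrime 17364052083370132981 a) ∧
    ∃ p : ℕ, p.Prime ∧ p % 4 = 1 ∧ jacobiSym 17364052083370132981 p = -1 ∧
      (∀ q : ℕ, q.Prime → q % 4 = 1 → jacobiSym 17364052083370132981 q = -1 → p ≤ q) ∧
      (p : ZMod 17364052083370132981) ^ ((17364052083370132981 - 1) / 2) = -1 := by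
  have hsqrt1 : Nat.sqrt 17364052083370132981 = 4167019568 := by
    apply le_antisymm
    · have := Nat.sqrt_lt.mpr (show 17364052083370132981 < 4167019569 * 4167019569 by norm_num)
      omega
    · exact Nat.le_sqrt.mpr (by norm_num)
  have hsqrt2 : Nat.sqrt (17364052083370132981 / 2) = 2946527794 := by
    apply le_antisymm
    · have := Nat.sqrt_lt.mpr (show 17364052083370132981 / 2 < 2946527795 * 2946527795 by norm_num)
      omega
    · exact Nat.le_sqrt.mpr (by norm_num)
  refine ⟨by norm_num, ?_, ?_, 17, by norm_num, by norm_num, by norm_num, ?_, ?_⟩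
  · intro hp
    rcases (Nat.Prime.eq_one_or_self_of_dvd hp 548893 ⟨1646677 * 19211221, by norm_num⟩) with h | h
    · norm_num at h
    · norm_num at h
  · intro a ha
    rw [hsqrt1, hsqrt2] at ha
    fin_cases ha
    · exact spp_of_chain (zmod_neg_one chain0)
    · exact spp_of_chain (zmod_neg_one chain1)
    · have h : (4167019568 + 1 : ℕ) = 4167019569 := by norm_num
      rw [h]; exact spp_of_chain (zmod_neg_one chain2)
    · exact spp_of_chain (zmod_neg_one chain3)
    · have h : (2946527794 + 1 : ℕ) = 2946527795 := by norm_num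
      rw [h]; exact spp_of_chain (zmod_neg_one chain4)
  · intro q hq h4 hj
    by_contra hlt
    push_neg at hlt
    interval_cases q <;> simp_all <;> norm_num at hj
  · have : (17364052083370132981 - 1) / 2 = 8682026041685066490 := by norm_num
    rw [this]
    exact zmod_neg_one chain5
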